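/- For q ∈ (0,1), ν ∈ (0,1), α ∈ (0,1), the expectation of the random variable G with P(G=k) = ((α;q)_∞/(αν;q)_∞)·((ν;q)_k/(q;q)_k)·α^k equals (Ψ_q(log_q α) - Ψ_q(log_q(αν)))/log q, where Ψ_q is the q-digamma function and log_q x = log x/log q. -/

import Mathlib

open Real

/-- Finite q-Pochhammer symbol (x;q)_n = ∏_{j=0}^{n-1}(1 - x q^j). -/
noncomputable def qPoch (x q : ℝ) (n : ℕ) : ℝ := ∏ j ∈ Finset.range n, (1 - x * q ^ j)

/-- Infinite q-Pochhammer symbol (x;q)_∞ = ∏_{j=0}^∞ (1 - x q^j). -/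
noncomputable def qPochInf (x q : ℝ) : ℝ := ∏' j : ℕ, (1 - x * q ^ j)

/-- The q-gamma function Γ_q(z) = (1-q)^{1-z} (q;q)_∞ / (q^z;q)_∞. -/
noncomputable def qGamma (q z : ℝ) : ℝ :=
  (1 - q) ^ (1 - z) * qPochInf q q / qPochInf (q ^ z) q

/-- The q-digamma function Ψ_q(Z) = d/dZ log Γ_q(Z). -/
noncomputable def qDigamma (q Z : ℝ) : ℝ := deriv (fun z => Real.log (qGamma q z)) Z

namespace Stmt12Aux

/-- log of the infinite Pochhammer product. -/
noncomputable def Lq (q x : ℝ) : ℝ := ∑' n : ℕ, Real.log (1 - x * q ^ n)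

/-- The series S(x) = ∑ x q^n / (1 - x q^n). -/
noncomputable def Sq (q x : ℝ) : ℝ := ∑' n : ℕ, (x * q ^ n) / (1 - x * q ^ n)

/-- Derivative of Lq. -/
noncomputable def Dq (q x : ℝ) : ℝ := ∑' n : ℕ, -(q ^ n) / (1 - x * q ^ n)

variable {q x : ℝ}

lemma fac_pos (hq0 : 0 < q) (hq1 : q < 1) (hx : |x| < 1) (n : ℕ) :
    0 < 1 - x * q ^ n := by
  have h1 : x * q ^ n ≤ |x| * q ^ n := by
    have := pow_pos hq0 n
    nlinarith [le_abs_self x]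
  have h2 : |x| * q ^ n ≤ |x| * 1 := by
    have : q ^ n ≤ 1 := pow_le_one₀ hq0.le hq1.le
    nlinarith [abs_nonneg x]
  nlinarith

lemma fac_lb (hq0 : 0 < q) (hq1 : q < 1) {r : ℝ} (hx : |x| ≤ r) (hr : r < 1) (n : ℕ) :
    1 - r ≤ 1 - x * q ^ n := by
  have h1 : x * q ^ n ≤ |x| * q ^ n := by
    have := pow_pos hq0 n
    nlinarith [le_abs_self x]
  have h2 : q ^ n ≤ 1 := pow_le_one₀ hq0.le hq1.le
  have h0 : 0 ≤ |x| := abs_nonneg x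
  nlinarith

lemma abs_log_one_sub_le {t r : ℝ} (ht : |t| ≤ r) (hr : r < 1) :
    |Real.log (1 - t)| ≤ |t| / (1 - r) := by
  have hr0 : 0 ≤ r := le_trans (abs_nonneg t) ht
  have hden : (0:ℝ) < 1 - r := by linarith
  have ht1 : 0 < 1 - t := by
    have := le_of_abs_le ht
    linarith
  rcases le_or_gt 0 t with h | h
  · have hlog : Real.log (1 - t) ≤ 0 := Real.log_nonpos (by linarith) (by linarith)
    rw [abs_of_nonpos hlog, abs_of_nonneg h]
    have : Real.log (1 - t)⁻¹ ≤ (1 - t)⁻¹ - 1 := Real.log_le_sub_one_of_pos (by positivity)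
    rw [Real.log_inv] at this
    have h2 : (1 - t)⁻¹ - 1 = t / (1 - t) := by field_simp; ring
    have h3 : t / (1 - t) ≤ t / (1 - r) := by
      apply div_le_div_of_nonneg_left h hden
      have := le_of_abs_le ht
      rw [abs_of_nonneg h] at ht
      linarith
    linarith
  · have hlog : 0 ≤ Real.log (1 - t) := Real.log_nonneg (by linarith)
    rw [abs_of_nonneg hlog, abs_of_neg h]
    have h1 : Real.log (1 - t) ≤ (1 - t) - 1 := Real.log_le_sub_one_of_pos ht1
    have h2 : -t ≤ -t / (1 - r) := by
      rw [le_div_iff₀ hden]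
      nlinarith
    linarith

lemma summable_log (hq0 : 0 < q) (hq1 : q < 1) (hx : |x| < 1) :
    Summable fun n : ℕ => Real.log (1 - x * q ^ n) := by
  apply Summable.of_norm_bounded (g := fun n => (|x| / (1 - |x|)) * q ^ n)
    (((summable_geometric_of_lt_one hq0.le hq1).mul_left _))
  intro n
  have h1 : |x * q ^ n| ≤ |x| := by
    rw [abs_mul, abs_of_nonneg (pow_pos hq0 n).le]
    nlinarith [abs_nonneg x, pow_le_one₀ hq0.le hq1.le (n := n), pow_pos hq0 n]
  calc ‖Real.log (1 - x * q ^ n)‖ ≤ |x * q ^ n| / (1 - |x|) :=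
        abs_log_one_sub_le h1 hx
    _ ≤ |x| / (1 - |x|) * q ^ n := by
        rw [abs_mul, abs_of_nonneg (pow_pos hq0 n).le, div_mul_eq_mul_div, mul_div_assoc]

lemma qPochInf_eq_exp (hq0 : 0 < q) (hq1 : q < 1) (hx : |x| < 1) :
    qPochInf x q = Real.exp (Lq q x) := by
  have := Real.rexp_tsum_eq_tprod (f := fun n : ℕ => 1 - x * q ^ n)
    (fun n => fac_pos hq0 hq1 hx n) (summable_log hq0 hq1 hx)
  simpa [qPochInf, Lq, Function.comp] using this.symm

lemma qPochInf_pos (hq0 : 0 < q) (hq1 : q < 1) (hx : |x| < 1) :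
    0 < qPochInf x q := by
  rw [qPochInf_eq_exp hq0 hq1 hx]; exact Real.exp_pos _

lemma qPoch_eq_exp (hq0 : 0 < q) (hq1 : q < 1) (hx : |x| < 1) (n : ℕ) :
    qPoch x q n = Real.exp (∑ j ∈ Finset.range n, Real.log (1 - x * q ^ j)) := by
  rw [Real.exp_sum, qPoch]
  exact Finset.prod_congr rfl fun j _ => (Real.exp_log (fac_pos hq0 hq1 hx j)).symm

lemma tendsto_qPoch (hq0 : 0 < q) (hq1 : q < 1) (hx : |x| < 1) :
    Filter.Tendsto (fun n => qPoch x q n) Filter.atTop (nhds (qPochInf x q)) := by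
  rw [qPochInf_eq_exp hq0 hq1 hx]
  have h := (summable_log hq0 hq1 hx (q := q) (x := x)).hasSum.tendsto_sum_nat
  have := (Real.continuous_exp.continuousAt (x := Lq q x)).tendsto.comp h
  simpa [Function.comp_def, funext fun n => qPoch_eq_exp hq0 hq1 hx n] using this

lemma qPoch_ge (hq0 : 0 < q) (hq1 : q < 1) (hx0 : 0 ≤ x) (hx : |x| < 1) (n : ℕ) :
    qPochInf x q ≤ qPoch x q n := by
  rw [qPochInf_eq_exp hq0 hq1 hx, qPoch_eq_exp hq0 hq1 hx, Real.exp_le_exp, Lq]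
  have hs := summable_log hq0 hq1 hx (q := q) (x := x)
  rw [← hs.sum_add_tsum_nat_add n]
  have : ∑' (i : ℕ), Real.log (1 - x * q ^ (i + n)) ≤ 0 := by
    apply tsum_nonpos
    intro i
    apply Real.log_nonpos (fac_pos hq0 hq1 hx _).le
    nlinarith [pow_pos hq0 (i+n), pow_le_one₀ hq0.le hq1.le (n := i+n),
      fac_pos hq0 hq1 hx (i+n)]
  linarith

lemma summable_Sq (hq0 : 0 < q) (hq1 : q < 1) (hx : |x| < 1) :
    Summable fun n : ℕ => (x * q ^ n) / (1 - x * q ^ n) := by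
  apply Summable.of_norm_bounded (g := fun n => (|x| / (1 - |x|)) * q ^ n)
    ((summable_geometric_of_lt_one hq0.le hq1).mul_left _)
  intro n
  have hp := fac_lb hq0 hq1 (le_refl |x|) hx n
  have hpos : (0:ℝ) < 1 - |x| := by have := abs_nonneg x; linarith
  rw [norm_div, Real.norm_eq_abs, Real.norm_eq_abs,
    abs_of_pos (lt_of_lt_of_le hpos hp)]
  rw [div_le_iff₀ (lt_of_lt_of_le hpos hp), abs_mul,
    abs_of_nonneg (pow_pos hq0 n).le, div_mul_eq_mul_div, mul_comm (|x|) (q^n),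
    mul_div_assoc, mul_comm (q^n)]
  have h1 : |x| / (1 - |x|) * (1 - |x|) = |x| := by field_simp
  nlinarith [pow_pos hq0 n, abs_nonneg x,
    mul_le_mul_of_nonneg_left hp (by positivity : (0:ℝ) ≤ q ^ n * (|x| / (1 - |x|)))]

lemma summable_Dq (hq0 : 0 < q) (hq1 : q < 1) (hx : |x| < 1) :
    Summable fun n : ℕ => -(q ^ n) / (1 - x * q ^ n) := by
  apply Summable.of_norm_bounded (g := fun n => (1 / (1 - |x|)) * q ^ n)
    ((summable_geometric_of_lt_one hq0.le hq1).mul_left _)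
  intro n
  have hp := fac_lb hq0 hq1 (le_refl |x|) hx n
  have hpos : (0:ℝ) < 1 - |x| := by have := abs_nonneg x; linarith
  have hd := lt_of_lt_of_le hpos hp
  rw [norm_div, Real.norm_eq_abs, Real.norm_eq_abs, abs_neg,
    abs_of_nonneg (pow_pos hq0 n).le, abs_of_pos hd, div_le_iff₀ hd,
    one_div, mul_comm _ (q^n), mul_assoc]
  nlinarith [pow_pos hq0 n, mul_le_mul_of_nonneg_left hp (inv_nonneg.mpr hpos.le),
    inv_mul_cancel₀ hpos.ne']

lemma hasDerivAt_Lq (hq0 : 0 < q) (hq1 : q < 1) (hx : |x| < 1) :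
    HasDerivAt (Lq q) (Dq q x) x := by
  set r : ℝ := (1 + |x|) / 2 with hr
  have hxr : |x| < r := by rw [hr]; have := abs_nonneg x; linarith
  have hr1 : r < 1 := by rw [hr]; linarith
  have hr0 : (0:ℝ) < 1 - r := by linarith
  have hmem : ∀ y : ℝ, y ∈ Metric.ball (0:ℝ) r → |y| < r := by
    intro y hy
    simpa [Real.dist_eq] using hy
  apply hasDerivAt_tsum_of_isPreconnected
    (u := fun n => (1 / (1 - r)) * q ^ n)
    ((summable_geometric_of_lt_one hq0.le hq1).mul_left _)
    Metric.isOpen_ball ((convex_ball (0:ℝ) r).isPreconnected)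
    (g := fun n y => Real.log (1 - y * q ^ n))
    (g' := fun n y => -(q ^ n) / (1 - y * q ^ n))
    ?_ ?_ (y₀ := 0) ?_ ?_ ?_
  · intro n y hy
    have hpos : 0 < 1 - y * q ^ n := fac_pos hq0 hq1 ((hmem y hy).trans hr1) n
    have h1 : HasDerivAt (fun y : ℝ => 1 - y * q ^ n) (-(q ^ n)) y := by
      simpa using ((hasDerivAt_id y).mul_const (q ^ n)).const_sub 1
    simpa using h1.log hpos.ne'
  · intro n y hy
    have hlb := fac_lb hq0 hq1 (hmem y hy).le hr1 n
    have hd : (0:ℝ) < 1 - y * q ^ n := lt_of_lt_of_le hr0 hlb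
    rw [norm_div, Real.norm_eq_abs, Real.norm_eq_abs, abs_neg,
      abs_of_nonneg (pow_pos hq0 n).le, abs_of_pos hd, div_le_iff₀ hd, one_div,
      mul_comm _ (q ^ n), mul_assoc]
    nlinarith [pow_pos hq0 n, mul_le_mul_of_nonneg_left hlb (inv_nonneg.mpr hr0.le),
      inv_mul_cancel₀ hr0.ne']
  · simp only [Metric.mem_ball, Real.dist_eq, sub_zero, abs_zero]
    linarith [abs_nonneg x]
  · simpa using summable_zero
  · simpa [Metric.mem_ball, Real.dist_eq] using hxr

lemma mul_Dq (hq0 : 0 < q) (hq1 : q < 1) (hx : |x| < 1) :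
    x * Dq q x = -Sq q x := by
  rw [Dq, ← tsum_mul_left, Sq, ← tsum_neg]
  apply tsum_congr
  intro n
  field_simp

lemma rpow_logdiv (hq0 : 0 < q) (hq1 : q < 1) {a : ℝ} (ha0 : 0 < a) :
    q ^ (Real.log a / Real.log q) = a := by
  rw [Real.rpow_def_of_pos hq0, mul_comm,
    div_mul_cancel₀ _ (Real.log_neg hq0 hq1).ne, Real.exp_log ha0]

lemma qDigamma_eq (hq0 : 0 < q) (hq1 : q < 1) {Z : ℝ} (hZ : 0 < Z) :
    qDigamma q Z = -Real.log (1 - q) + Real.log q * Sq q (q ^ Z) := by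
  have hq1' : (0:ℝ) < 1 - q := by linarith
  have habsq : |q| < 1 := by rw [abs_of_pos hq0]; exact hq1
  have key : ∀ z : ℝ, 0 < z → Real.log (qGamma q z)
      = (1 - z) * Real.log (1 - q) + Real.log (qPochInf q q) - Lq q (q ^ z) := by
    intro z hz
    have hx : 0 < q ^ (z:ℝ) := Real.rpow_pos_of_pos hq0 z
    have hx1 : q ^ (z:ℝ) < 1 := Real.rpow_lt_one hq0.le hq1 hz
    have habs : |q ^ (z:ℝ)| < 1 := by rw [abs_of_pos hx]; exact hx1
    rw [qGamma, qPochInf_eq_exp hq0 hq1 habs, Real.log_div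
        (mul_ne_zero (Real.rpow_pos_of_pos hq1' _).ne' (qPochInf_pos hq0 hq1 habsq).ne')
        (Real.exp_pos _).ne',
      Real.log_mul (Real.rpow_pos_of_pos hq1' _).ne' (qPochInf_pos hq0 hq1 habsq).ne',
      Real.log_rpow hq1', Real.log_exp]
  have hev : (fun z => Real.log (qGamma q z)) =ᶠ[nhds Z]
      fun z => (1 - z) * Real.log (1 - q) + Real.log (qPochInf q q) - Lq q (q ^ z) := by
    filter_upwards [IsOpen.mem_nhds isOpen_Ioi hZ] with z hz
    exact key z hz
  have hX : 0 < q ^ (Z:ℝ) := Real.rpow_pos_of_pos hq0 Z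
  have hX1 : q ^ (Z:ℝ) < 1 := Real.rpow_lt_one hq0.le hq1 hZ
  have habsX : |q ^ (Z:ℝ)| < 1 := by rw [abs_of_pos hX]; exact hX1
  have h1 : HasDerivAt (fun z : ℝ => (1 - z) * Real.log (1 - q))
      (-Real.log (1 - q)) Z := by
    simpa using ((hasDerivAt_id Z).const_sub 1).mul_const (Real.log (1 - q))
  have h2 : HasDerivAt (fun z : ℝ => q ^ z) (q ^ (Z:ℝ) * Real.log q) Z :=
    (Real.hasStrictDerivAt_const_rpow hq0 Z).hasDerivAt
  have h3 : HasDerivAt (fun z : ℝ => Lq q (q ^ z))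
      (Dq q (q ^ (Z:ℝ)) * (q ^ (Z:ℝ) * Real.log q)) Z :=
    (hasDerivAt_Lq hq0 hq1 habsX).comp Z h2
  have h4 : HasDerivAt (fun z : ℝ =>
      (1 - z) * Real.log (1 - q) + Real.log (qPochInf q q) - Lq q (q ^ z))
      (-Real.log (1 - q) - Dq q (q ^ (Z:ℝ)) * (q ^ (Z:ℝ) * Real.log q)) Z :=
    (h1.add_const _).sub h3
  rw [qDigamma, Filter.EventuallyEq.deriv_eq hev, h4.deriv]
  have := mul_Dq (x := q ^ (Z:ℝ)) hq0 hq1 habsX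
  linear_combination -Real.log q * this

/-- coefficients of the q-binomial series -/
noncomputable def cc (q ν : ℝ) (k : ℕ) : ℝ := qPoch ν q k / qPoch q q k

/-- the q-binomial series -/
noncomputable def Fq (q ν x : ℝ) : ℝ := ∑' k : ℕ, cc q ν k * x ^ k

variable {ν : ℝ}

lemma qPoch_pos (hq0 : 0 < q) (hq1 : q < 1) (hx : |x| < 1) (k : ℕ) :
    0 < qPoch x q k :=
  Finset.prod_pos fun j _ => fac_pos hq0 hq1 hx j

lemma qPoch_le_one (hq0 : 0 < q) (hq1 : q < 1) (hx0 : 0 ≤ x) (hx : |x| < 1) (k : ℕ) :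
    qPoch x q k ≤ 1 := by
  apply Finset.prod_le_one
  · intro j _; exact (fac_pos hq0 hq1 hx j).le
  · intro j _
    nlinarith [pow_pos hq0 j, mul_nonneg hx0 (pow_pos hq0 j).le]

lemma cc_pos (hq0 : 0 < q) (hq1 : q < 1) (hν0 : 0 < ν) (hν1 : ν < 1) (k : ℕ) :
    0 < cc q ν k :=
  div_pos (qPoch_pos hq0 hq1 (by rw [abs_of_pos hν0]; exact hν1) k)
    (qPoch_pos hq0 hq1 (by rw [abs_of_pos hq0]; exact hq1) k)

lemma cc_le (hq0 : 0 < q) (hq1 : q < 1) (hν0 : 0 < ν) (hν1 : ν < 1) (k : ℕ) :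
    cc q ν k ≤ (qPochInf q q)⁻¹ := by
  have habsq : |q| < 1 := by rw [abs_of_pos hq0]; exact hq1
  have habsν : |ν| < 1 := by rw [abs_of_pos hν0]; exact hν1
  rw [cc, ← one_div]
  exact div_le_div₀ zero_le_one (qPoch_le_one hq0 hq1 hν0.le habsν k)
    (qPochInf_pos hq0 hq1 habsq) (qPoch_ge hq0 hq1 hq0.le habsq k)

lemma cc_zero : cc q ν 0 = 1 := by simp [cc, qPoch]

lemma cc_rec (hq0 : 0 < q) (hq1 : q < 1) (hν0 : 0 < ν) (hν1 : ν < 1) (k : ℕ) :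
    cc q ν (k + 1) * (1 - q * q ^ k) = cc q ν k * (1 - ν * q ^ k) := by
  have habsq : |q| < 1 := by rw [abs_of_pos hq0]; exact hq1
  have h1 : (0:ℝ) < qPoch q q k := qPoch_pos hq0 hq1 habsq k
  have h2 : (0:ℝ) < 1 - q * q ^ k := fac_pos hq0 hq1 habsq k
  rw [cc, cc, qPoch, qPoch, Finset.prod_range_succ, Finset.prod_range_succ]
  rw [← qPoch, ← qPoch]
  rw [div_mul_eq_mul_div, div_mul_eq_mul_div, div_eq_div_iff (mul_pos h1 h2).ne' h1.ne']
  ring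

lemma summable_cc_geom (hq0 : 0 < q) (hq1 : q < 1) (hν0 : 0 < ν) (hν1 : ν < 1)
    (hx : |x| < 1) : Summable fun k : ℕ => cc q ν k * x ^ k := by
  apply Summable.of_norm_bounded (g := fun k => (qPochInf q q)⁻¹ * |x| ^ k)
    ((summable_geometric_of_lt_one (abs_nonneg x) hx).mul_left _)
  intro k
  rw [norm_mul, Real.norm_eq_abs, Real.norm_eq_abs, abs_pow,
    abs_of_pos (cc_pos hq0 hq1 hν0 hν1 k)]
  exact mul_le_mul_of_nonneg_right (cc_le hq0 hq1 hν0 hν1 k) (pow_nonneg (abs_nonneg x) k)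

lemma funcEq (hq0 : 0 < q) (hq1 : q < 1) (hν0 : 0 < ν) (hν1 : ν < 1) (hx : |x| < 1) :
    (1 - x) * Fq q ν x = (1 - ν * x) * Fq q ν (q * x) := by
  have hqx : |q * x| < 1 := by
    rw [abs_mul, abs_of_pos hq0]
    nlinarith [abs_nonneg x]
  have S1 : Summable fun k : ℕ => cc q ν k * x ^ k := summable_cc_geom hq0 hq1 hν0 hν1 hx
  have S2 : Summable fun k : ℕ => cc q ν k * (q * x) ^ k :=
    summable_cc_geom hq0 hq1 hν0 hν1 hqx
  have key : Fq q ν x - Fq q ν (q * x) = x * (Fq q ν x - ν * Fq q ν (q * x)) := by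
    have h1 : Fq q ν x - Fq q ν (q * x)
        = ∑' k : ℕ, (cc q ν k * x ^ k - cc q ν k * (q * x) ^ k) :=
      (S1.tsum_sub S2).symm
    rw [h1, (S1.sub S2).tsum_eq_zero_add]
    simp only [pow_zero, mul_one, sub_self, zero_add]
    have h2 : ∀ k : ℕ, cc q ν (k + 1) * x ^ (k + 1) - cc q ν (k + 1) * (q * x) ^ (k + 1)
        = x * (cc q ν k * x ^ k - ν * (cc q ν k * (q * x) ^ k)) := by
      intro k
      have hrec := cc_rec hq0 hq1 hν0 hν1 k
      linear_combination (x ^ (k + 1)) * hrec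
    rw [tsum_congr h2, tsum_mul_left, S1.tsum_sub (S2.mul_left ν), tsum_mul_left]
    rfl
  linear_combination key

lemma iter (hq0 : 0 < q) (hq1 : q < 1) (hν0 : 0 < ν) (hν1 : ν < 1) (hx : |x| < 1)
    (n : ℕ) : qPoch x q n * Fq q ν x = qPoch (x * ν) q n * Fq q ν (q ^ n * x) := by
  induction n with
  | zero => simp [qPoch]
  | succ n ih =>
    have hxn : |q ^ n * x| < 1 := by
      rw [abs_mul, abs_of_pos (pow_pos hq0 n)]
      nlinarith [abs_nonneg x, pow_le_one₀ hq0.le hq1.le (n := n), pow_pos hq0 n]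
    have hfe := funcEq hq0 hq1 hν0 hν1 hxn
    have harg : q * (q ^ n * x) = q ^ (n + 1) * x := by ring
    rw [harg] at hfe
    rw [qPoch, qPoch, Finset.prod_range_succ, Finset.prod_range_succ, ← qPoch, ← qPoch]
    have hν' : 1 - ν * (q ^ n * x) = 1 - x * ν * q ^ n := by ring
    rw [hν'] at hfe
    linear_combination (1 - x * q ^ n) * ih + qPoch (x * ν) q n * hfe

lemma Fbound (hq0 : 0 < q) (hq1 : q < 1) (hν0 : 0 < ν) (hν1 : ν < 1) (hx : |x| < 1)
    {y : ℝ} (hy : |y| ≤ |x|) :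
    |Fq q ν y - 1| ≤ (qPochInf q q)⁻¹ * (1 - |x|)⁻¹ * |y| := by
  have hy1 : |y| < 1 := lt_of_le_of_lt hy hx
  have Sy := summable_cc_geom hq0 hq1 hν0 hν1 hy1
  have Sy1 : Summable fun k : ℕ => cc q ν (k + 1) * y ^ (k + 1) :=
    (summable_nat_add_iff (f := fun k : ℕ => cc q ν k * y ^ k) 1).mpr Sy
  have h0 : Fq q ν y - 1 = ∑' k : ℕ, cc q ν (k + 1) * y ^ (k + 1) := by
    rw [Fq, Sy.tsum_eq_zero_add]
    simp [cc_zero]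
  have hC0 : (0:ℝ) < (qPochInf q q)⁻¹ :=
    inv_pos.mpr (qPochInf_pos hq0 hq1 (by rw [abs_of_pos hq0]; exact hq1))
  have hxx : (0:ℝ) < 1 - |x| := by linarith
  have hb : ∀ k : ℕ, ‖cc q ν (k + 1) * y ^ (k + 1)‖
      ≤ ((qPochInf q q)⁻¹ * |y|) * |x| ^ k := by
    intro k
    rw [norm_mul, Real.norm_eq_abs, Real.norm_eq_abs, abs_pow,
      abs_of_pos (cc_pos hq0 hq1 hν0 hν1 (k + 1)), pow_succ]
    have h1 : cc q ν (k + 1) ≤ (qPochInf q q)⁻¹ := cc_le hq0 hq1 hν0 hν1 (k + 1)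
    have h2 : |y| ^ k ≤ |x| ^ k := pow_le_pow_left₀ (abs_nonneg y) hy k
    have h3 : (0:ℝ) ≤ |y| ^ k := pow_nonneg (abs_nonneg y) k
    have h4 : (0:ℝ) ≤ |x| ^ k := pow_nonneg (abs_nonneg x) k
    have e1 : cc q ν (k + 1) * (|y| ^ k * |y|) ≤ (qPochInf q q)⁻¹ * (|y| ^ k * |y|) :=
      mul_le_mul_of_nonneg_right h1 (by positivity)
    have e2 : (qPochInf q q)⁻¹ * (|y| ^ k * |y|) ≤ (qPochInf q q)⁻¹ * (|x| ^ k * |y|) :=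
      mul_le_mul_of_nonneg_left (mul_le_mul_of_nonneg_right h2 (abs_nonneg y)) hC0.le
    nlinarith [e1, e2]
  have hsb : Summable fun k : ℕ => ((qPochInf q q)⁻¹ * |y|) * |x| ^ k :=
    (summable_geometric_of_lt_one (abs_nonneg x) hx).mul_left _
  calc |Fq q ν y - 1| ≤ ∑' k : ℕ, ‖cc q ν (k + 1) * y ^ (k + 1)‖ := by
        rw [h0, ← Real.norm_eq_abs]
        exact norm_tsum_le_tsum_norm (Sy1.abs)
    _ ≤ ∑' k : ℕ, ((qPochInf q q)⁻¹ * |y|) * |x| ^ k :=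
        Summable.tsum_le_tsum hb (Sy1.abs) hsb
    _ = ((qPochInf q q)⁻¹ * |y|) * (1 - |x|)⁻¹ := by
        rw [tsum_mul_left, tsum_geometric_of_lt_one (abs_nonneg x) hx]
    _ = (qPochInf q q)⁻¹ * (1 - |x|)⁻¹ * |y| := by ring

lemma qbinom (hq0 : 0 < q) (hq1 : q < 1) (hν0 : 0 < ν) (hν1 : ν < 1) (hx : |x| < 1) :
    Fq q ν x = Real.exp (Lq q (x * ν) - Lq q x) := by
  have habsxν : |x * ν| < 1 := by
    rw [abs_mul, abs_of_pos hν0]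
    nlinarith [abs_nonneg x]
  have t1 := tendsto_qPoch (x := x) hq0 hq1 hx
  have t2 := tendsto_qPoch (x := x * ν) hq0 hq1 habsxν
  have t3 : Filter.Tendsto (fun n : ℕ => Fq q ν (q ^ n * x)) Filter.atTop (nhds 1) := by
    rw [← tendsto_sub_nhds_zero_iff]
    apply squeeze_zero_norm
      (a := fun n : ℕ => ((qPochInf q q)⁻¹ * (1 - |x|)⁻¹ * |x|) * q ^ n)
    · intro n
      have hyx : |q ^ n * x| ≤ |x| := by
        rw [abs_mul, abs_of_pos (pow_pos hq0 n)]
        nlinarith [abs_nonneg x, pow_le_one₀ hq0.le hq1.le (n := n), pow_pos hq0 n]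
      have := Fbound hq0 hq1 hν0 hν1 hx hyx
      rw [Real.norm_eq_abs]
      calc |Fq q ν (q ^ n * x) - 1| ≤ (qPochInf q q)⁻¹ * (1 - |x|)⁻¹ * |q ^ n * x| := this
        _ = (qPochInf q q)⁻¹ * (1 - |x|)⁻¹ * |x| * q ^ n := by
            rw [abs_mul, abs_of_pos (pow_pos hq0 n)]; ring
    · have := (tendsto_pow_atTop_nhds_zero_of_lt_one hq0.le hq1).const_mul
        ((qPochInf q q)⁻¹ * (1 - |x|)⁻¹ * |x|)
      simpa using this
  have huniq := tendsto_nhds_unique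
    ((t1.mul_const (Fq q ν x)).congr (fun n => iter hq0 hq1 hν0 hν1 hx n))
    (t2.mul t3)
  rw [qPochInf_eq_exp hq0 hq1 hx, qPochInf_eq_exp hq0 hq1 habsxν] at huniq
  rw [Real.exp_sub, eq_div_iff (Real.exp_pos _).ne']
  linear_combination huniq

lemma hasDerivAt_Fq (hq0 : 0 < q) (hq1 : q < 1) (hν0 : 0 < ν) (hν1 : ν < 1)
    (hx : |x| < 1) :
    HasDerivAt (Fq q ν) (∑' k : ℕ, cc q ν k * ((k:ℝ) * x ^ (k - 1))) x := by
  set C : ℝ := (qPochInf q q)⁻¹ with hC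
  have hC0 : (0:ℝ) < C :=
    inv_pos.mpr (qPochInf_pos hq0 hq1 (by rw [abs_of_pos hq0]; exact hq1))
  set r : ℝ := (1 + |x|) / 2 with hr
  have hxr : |x| < r := by rw [hr]; have := abs_nonneg x; linarith
  have hr0 : (0:ℝ) < r := by rw [hr]; have := abs_nonneg x; linarith
  have hr1 : r < 1 := by rw [hr]; linarith
  have hmem : ∀ y : ℝ, y ∈ Metric.ball (0:ℝ) r → |y| < r := by
    intro y hy; simpa [Real.dist_eq] using hy
  have hsum1 : Summable fun k : ℕ => ((k:ℝ) + 1) * r ^ k := by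
    have h1 := summable_pow_mul_geometric_of_norm_lt_one (R := ℝ) 1
      (by rw [Real.norm_eq_abs, abs_of_pos hr0]; exact hr1)
    have h2 := summable_geometric_of_lt_one hr0.le hr1
    have := h1.add h2
    simpa [add_mul] using this
  have hshift : Summable fun k : ℕ => ((k + 1 : ℕ) : ℝ) * r ^ ((k + 1) - 1) := by
    simpa [Nat.cast_add] using hsum1
  have hsumf : Summable fun k : ℕ => (k : ℝ) * r ^ (k - 1) :=
    (summable_nat_add_iff (f := fun k : ℕ => (k:ℝ) * r ^ (k - 1)) 1).mp hshift
  have hsumu : Summable fun k : ℕ => C * ((k : ℝ) * r ^ (k - 1)) := hsumf.mul_left C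
  apply hasDerivAt_tsum_of_isPreconnected hsumu Metric.isOpen_ball
    ((convex_ball (0:ℝ) r).isPreconnected)
    (g := fun k y => cc q ν k * y ^ k)
    (g' := fun k y => cc q ν k * ((k:ℝ) * y ^ (k - 1)))
    ?_ ?_ (y₀ := x) ?_ ?_ ?_
  · intro k y _
    exact (hasDerivAt_pow k y).const_mul (cc q ν k)
  · intro k y hy
    have hyr := hmem y hy
    rw [norm_mul, Real.norm_eq_abs, Real.norm_eq_abs,
      abs_of_pos (cc_pos hq0 hq1 hν0 hν1 k), abs_mul, abs_pow,
      Nat.abs_cast]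
    have h1 : cc q ν k ≤ C := cc_le hq0 hq1 hν0 hν1 k
    have h2 : |y| ^ (k - 1) ≤ r ^ (k - 1) := pow_le_pow_left₀ (abs_nonneg y) hyr.le _
    have h3 : (0:ℝ) ≤ (k:ℝ) * r ^ (k - 1) := by positivity
    have e1 : cc q ν k * ((k:ℝ) * |y| ^ (k - 1)) ≤ cc q ν k * ((k:ℝ) * r ^ (k - 1)) :=
      mul_le_mul_of_nonneg_left
        (mul_le_mul_of_nonneg_left h2 (Nat.cast_nonneg k))
        (cc_pos hq0 hq1 hν0 hν1 k).le
    have e2 : cc q ν k * ((k:ℝ) * r ^ (k - 1)) ≤ C * ((k:ℝ) * r ^ (k - 1)) :=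
      mul_le_mul_of_nonneg_right h1 h3
    linarith
  · simpa [Metric.mem_ball, Real.dist_eq] using hxr
  · exact summable_cc_geom hq0 hq1 hν0 hν1 hx
  · simpa [Metric.mem_ball, Real.dist_eq] using hxr

lemma deriv_id (hq0 : 0 < q) (hq1 : q < 1) (hν0 : 0 < ν) (hν1 : ν < 1) (hx : |x| < 1) :
    ∑' k : ℕ, cc q ν k * ((k:ℝ) * x ^ (k - 1))
      = Fq q ν x * (Dq q (x * ν) * ν - Dq q x) := by
  have habsxν : |x * ν| < 1 := by
    rw [abs_mul, abs_of_pos hν0]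
    nlinarith [abs_nonneg x]
  have i1 : HasDerivAt (fun y : ℝ => Lq q (y * ν)) (Dq q (x * ν) * ν) x :=
    by have := (hasDerivAt_Lq hq0 hq1 habsxν).comp x (hasDerivAt_mul_const (x := x) ν)
       exact this
  have i2 : HasDerivAt (fun y : ℝ => Lq q y) (Dq q x) x := hasDerivAt_Lq hq0 hq1 hx
  have hG : HasDerivAt (fun y : ℝ => Real.exp (Lq q (y * ν) - Lq q y))
      (Real.exp (Lq q (x * ν) - Lq q x) * (Dq q (x * ν) * ν - Dq q x)) x :=
    (i1.sub i2).exp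
  have hev : Fq q ν =ᶠ[nhds x] fun y : ℝ => Real.exp (Lq q (y * ν) - Lq q y) := by
    have hmem : x ∈ Set.Ioo (-1:ℝ) 1 := by
      obtain ⟨h1, h2⟩ := abs_lt.mp hx
      exact ⟨h1, h2⟩
    filter_upwards [IsOpen.mem_nhds isOpen_Ioo hmem] with y hy
    exact qbinom hq0 hq1 hν0 hν1 (abs_lt.mpr ⟨hy.1, hy.2⟩)
  have hF : HasDerivAt (Fq q ν)
      (Real.exp (Lq q (x * ν) - Lq q x) * (Dq q (x * ν) * ν - Dq q x)) x :=
    hG.congr_of_eventuallyEq hev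
  have := (hasDerivAt_Fq hq0 hq1 hν0 hν1 hx).unique hF
  rw [this, qbinom hq0 hq1 hν0 hν1 hx]

end Stmt12Aux

open Stmt12Aux in
/-- The expectation of the stationary gap distribution:
E(G) = (Ψ_q(log_q α) - Ψ_q(log_q(αν)))/log q. -/
theorem stmt_12 (q ν α : ℝ) (hq0 : 0 < q) (hq1 : q < 1) (hν0 : 0 < ν) (hν1 : ν < 1)
    (hα0 : 0 < α) (hα1 : α < 1) :
    ∑' k : ℕ, (k : ℝ) *
        (qPochInf α q / qPochInf (α*ν) q * (qPoch ν q k / qPoch q q k) * α ^ k)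
      = (qDigamma q (Real.log α / Real.log q) - qDigamma q (Real.log (α*ν) / Real.log q))
          / Real.log q := by
  have habsα : |α| < 1 := by rw [abs_of_pos hα0]; exact hα1
  have hαν0 : 0 < α * ν := mul_pos hα0 hν0
  have hαν1 : α * ν < 1 := by nlinarith
  have habsαν : |α * ν| < 1 := by rw [abs_of_pos hαν0]; exact hαν1
  have hlogq : Real.log q < 0 := Real.log_neg hq0 hq1
  set P : ℝ := qPochInf α q / qPochInf (α*ν) q with hP
  -- LHS computation
  have hpt : ∀ k : ℕ, (k : ℝ) * (P * (qPoch ν q k / qPoch q q k) * α ^ k)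
      = (P * α) * (cc q ν k * ((k:ℝ) * α ^ (k - 1))) := by
    intro k
    cases k with
    | zero => simp
    | succ n =>
      have : α ^ (n + 1 - 1) = α ^ n := by simp
      rw [this, cc]
      push_cast
      ring_nf
  have hLHS : ∑' k : ℕ, (k : ℝ) * (P * (qPoch ν q k / qPoch q q k) * α ^ k)
      = (P * α) * (Fq q ν α * (Dq q (α * ν) * ν - Dq q α)) := by
    rw [tsum_congr hpt, tsum_mul_left, deriv_id hq0 hq1 hν0 hν1 habsα]
  have hPF : P * Fq q ν α = 1 := by
    rw [hP, qbinom hq0 hq1 hν0 hν1 habsα, qPochInf_eq_exp hq0 hq1 habsα,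
      qPochInf_eq_exp hq0 hq1 habsαν, ← Real.exp_sub, ← Real.exp_add]
    simp
  -- RHS computation
  have hZα : 0 < Real.log α / Real.log q :=
    div_pos_of_neg_of_neg (Real.log_neg hα0 hα1) hlogq
  have hZαν : 0 < Real.log (α * ν) / Real.log q :=
    div_pos_of_neg_of_neg (Real.log_neg hαν0 hαν1) hlogq
  have hrw1 : q ^ (Real.log α / Real.log q : ℝ) = α := rpow_logdiv hq0 hq1 hα0
  have hrw2 : q ^ (Real.log (α * ν) / Real.log q : ℝ) = α * ν := rpow_logdiv hq0 hq1 hαν0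
  have hD1 := qDigamma_eq hq0 hq1 hZα
  have hD2 := qDigamma_eq hq0 hq1 hZαν
  rw [hrw1] at hD1
  rw [hrw2] at hD2
  have hRHS : (qDigamma q (Real.log α / Real.log q)
      - qDigamma q (Real.log (α*ν) / Real.log q)) / Real.log q
      = Sq q α - Sq q (α * ν) := by
    rw [hD1, hD2, div_eq_iff hlogq.ne]
    ring
  rw [hRHS, hLHS]
  have m1 := mul_Dq (x := α) hq0 hq1 habsα
  have m2 := mul_Dq (x := α * ν) hq0 hq1 habsαν
  have hexp : (P * α) * (Fq q ν α * (Dq q (α * ν) * ν - Dq q α))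
      = (P * Fq q ν α) * ((α * ν) * Dq q (α * ν) - α * Dq q α) := by ring
  rw [hexp, hPF, m1, m2]
  ring
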